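/- Let (T, Q) be a tree-decomposition of the intersection graph of an instance of problem GB, and let x̃ ∈ {0,1}^n be GB-feasible. Define X̃[Y, N] = Π_{j∈Y} x̃_j · Π_{j∈N} (1 − x̃_j) for every pair (Y, N) belonging to some Ω_t, and define λ̃^t_v = 1 if v is the restriction of x̃ to Q_t and λ̃^t_v = 0 for all other v ∈ F_t. Then (X̃, λ̃) is a feasible, 0/1-valued solution of LP-GB, and for every cost vector c ∈ ℝ^n, Σ_{j=1}^n c_j X̃[{j}, ∅] = Σ_{j=1}^n c_j x̃_j. -/

import Mathlib

open Finset

/-- The real value of a Boolean (0 or 1). -/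
def bval (b : Bool) : ℝ := if b then 1 else 0

/-- Restriction of a 0/1 vector on `Fin n` to the coordinates in `A`. -/
def restr {n : ℕ} (x : Fin n → Bool) (A : Finset (Fin n)) : {j // j ∈ A} → Bool :=
  fun j => x j.val

/-- GB-feasibility: the restriction of `x` to each constraint support `K i` lies in `Sc i`. -/
def GBFeas {n m : ℕ} (K : Fin m → Finset (Fin n))
    (Sc : ∀ i : Fin m, Set ({j // j ∈ K i} → Bool)) (x : Fin n → Bool) : Prop :=
  ∀ i, restr x (K i) ∈ Sc i

/-- The intersection graph of a GB instance. -/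
def interGraph {n m : ℕ} (K : Fin m → Finset (Fin n)) : SimpleGraph (Fin n) where
  Adj j k := j ≠ k ∧ ∃ i, j ∈ K i ∧ k ∈ K i
  symm := by
    constructor
    rintro j k ⟨hne, i, hj, hk⟩
    exact ⟨hne.symm, i, hk, hj⟩
  loopless := by
    constructor
    rintro j ⟨hne, -⟩
    exact hne rfl

/-- Tree-decomposition of a graph `H`: `T` is a finite tree, every vertex of `H` appears in a
set of bags inducing a (nonempty) connected subgraph of `T`, and each edge of `H` is contained
in some bag. -/
def IsTreeDecomp {V τ : Type} (H : SimpleGraph V) (T : SimpleGraph τ) (Q : τ → Finset V) : Prop :=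
  T.IsTree ∧ (∀ v : V, (T.induce {t | v ∈ Q t}).Connected) ∧
    (∀ u v : V, H.Adj u v → ∃ t, u ∈ Q t ∧ v ∈ Q t)

/-- `F t`: 0/1 vectors on `Q t` (canonically extended by `false` off `Q t`), satisfying every
constraint whose support is contained in `Q t`. -/
def Ffeas {n m : ℕ} {τ : Type} (K : Fin m → Finset (Fin n))
    (Sc : ∀ i : Fin m, Set ({j // j ∈ K i} → Bool)) (Q : τ → Finset (Fin n)) (t : τ) :
    Set (Fin n → Bool) :=
  {v | (∀ j, j ∉ Q t → v j = false) ∧ ∀ i, K i ⊆ Q t → restr v (K i) ∈ Sc i}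

/-- `Ω t`: pairs `(Y, N)` of disjoint subsets of `Q t` such that either `|Y| ≤ 1` and `N = ∅`,
or `(Y, N)` is a partition of `Q t ∩ Q t'` for some neighbor `t'` of `t` in `T`. -/
def Omega {n : ℕ} {τ : Type} (T : SimpleGraph τ) (Q : τ → Finset (Fin n)) (t : τ) :
    Set (Finset (Fin n) × Finset (Fin n)) :=
  {YN | Disjoint YN.1 YN.2 ∧ YN.1 ∪ YN.2 ⊆ Q t ∧
    ((YN.1.card ≤ 1 ∧ YN.2 = ∅) ∨ ∃ t', T.Adj t t' ∧ YN.1 ∪ YN.2 = Q t ∩ Q t')}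

/-- Feasibility for the linear system LP-GB (λ-variables are extended by `0` off `F t`). -/
def LPGBFeas {n m : ℕ} {τ : Type} (K : Fin m → Finset (Fin n))
    (Sc : ∀ i : Fin m, Set ({j // j ∈ K i} → Bool))
    (T : SimpleGraph τ) (Q : τ → Finset (Fin n))
    (X : Finset (Fin n) × Finset (Fin n) → ℝ) (lam : τ → (Fin n → Bool) → ℝ) : Prop :=
  (∀ t v, v ∉ Ffeas K Sc Q t → lam t v = 0) ∧
  (∀ t v, 0 ≤ lam t v) ∧
  (∀ t, ∑ v : Fin n → Bool, lam t v = 1) ∧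
  (∀ t, ∀ YN ∈ Omega T Q t,
    X YN = ∑ v : Fin n → Bool,
      lam t v * (∏ j ∈ YN.1, bval (v j)) * (∏ j ∈ YN.2, (1 - bval (v j))))

/-- Feasibility for the linear system LPz (λ-variables are extended by `0` off `F t`). -/
def LPzFeas {n m : ℕ} {τ : Type} (K : Fin m → Finset (Fin n))
    (Sc : ∀ i : Fin m, Set ({j // j ∈ K i} → Bool))
    (T : SimpleGraph τ) (Q : τ → Finset (Fin n))
    (Z : Finset (Fin n) → ℝ) (lam : τ → (Fin n → Bool) → ℝ) : Prop :=
  (∀ t v, v ∉ Ffeas K Sc Q t → lam t v = 0) ∧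
  (∀ t v, 0 ≤ lam t v) ∧
  (∀ t, ∑ v : Fin n → Bool, lam t v = 1) ∧
  (∀ t, ∀ S : Finset (Fin n), S ⊆ Q t →
    Z S = ∑ v ∈ Finset.univ.filter (fun v : Fin n → Bool => ∀ j ∈ S, v j = true), lam t v)

/-- Lemma: LP-GB is a relaxation of GB, in a strong sense. A GB-feasible 0/1
vector `xt` yields a feasible 0/1-valued solution `(Xt, lamt)` of LP-GB with the same objective
value for every cost vector. -/
theorem lpgb_relaxation
    {n m : ℕ} {τ : Type} [Fintype τ] (K : Fin m → Finset (Fin n))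
    (Sc : ∀ i : Fin m, Set ({j // j ∈ K i} → Bool))
    (T : SimpleGraph τ) (Q : τ → Finset (Fin n))
    (hTD : IsTreeDecomp (interGraph K) T Q)
    (xt : Fin n → Bool) (hx : GBFeas K Sc xt) :
    LPGBFeas K Sc T Q
      (fun YN : Finset (Fin n) × Finset (Fin n) =>
        (∏ j ∈ YN.1, bval (xt j)) * ∏ j ∈ YN.2, (1 - bval (xt j)))
      (fun t v => if v = (fun j => if j ∈ Q t then xt j else false) then (1 : ℝ) else 0) ∧
    (∀ t, ∀ YN ∈ Omega T Q t,
      ((∏ j ∈ YN.1, bval (xt j)) * ∏ j ∈ YN.2, (1 - bval (xt j))) = 0 ∨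
      ((∏ j ∈ YN.1, bval (xt j)) * ∏ j ∈ YN.2, (1 - bval (xt j))) = 1) ∧
    (∀ (t : τ) (v : Fin n → Bool),
      (if v = (fun j => if j ∈ Q t then xt j else false) then (1 : ℝ) else 0) = 0 ∨
      (if v = (fun j => if j ∈ Q t then xt j else false) then (1 : ℝ) else 0) = 1) ∧
    ∀ c : Fin n → ℝ,
      (∑ j, c j * ((∏ j' ∈ ({j} : Finset (Fin n)), bval (xt j')) *
          ∏ j' ∈ (∅ : Finset (Fin n)), (1 - bval (xt j')))) =
        ∑ j, c j * bval (xt j) := by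
  classical
  refine ⟨⟨?_, ?_, ?_, ?_⟩, ?_, ?_, ?_⟩
  · intro t v hv
    by_contra h
    simp only [ite_eq_right_iff, not_forall] at h
    obtain ⟨rfl, -⟩ := h
    apply hv
    constructor
    · intro j hj; simp [hj]
    · intro i hK
      have : restr (fun j => if j ∈ Q t then xt j else false) (K i) = restr xt (K i) := by
        funext j
        simp [restr, hK j.2]
      rw [this]
      exact hx i
  · intro t v; dsimp only; split <;> norm_num
  · intro t
    rw [Finset.sum_ite_eq' Finset.univ (fun j => if j ∈ Q t then xt j else false) (fun _ => (1:ℝ))]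
    simp
  · intro t YN hYN
    obtain ⟨hd, hsub, -⟩ := hYN
    dsimp only
    rw [Finset.sum_eq_single (fun j => if j ∈ Q t then xt j else false)]
    · rw [if_pos rfl, one_mul]
      congr 1
      · apply Finset.prod_congr rfl
        intro j hj
        simp [hsub (Finset.mem_union_left _ hj)]
      · apply Finset.prod_congr rfl
        intro j hj
        simp [hsub (Finset.mem_union_right _ hj)]
    · intro v _ hv
      rw [if_neg hv, zero_mul, zero_mul]
    · intro h; exact absurd (Finset.mem_univ _) h
  · intro t YN hYN
    have key : ∀ (s : Finset (Fin n)) (f : Fin n → ℝ), (∀ j ∈ s, f j = 0 ∨ f j = 1) →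
        (∏ j ∈ s, f j = 0 ∨ ∏ j ∈ s, f j = 1) := by
      intro s f hf
      refine Finset.prod_induction f (fun x => x = 0 ∨ x = 1) ?_ (Or.inr rfl) hf
      rintro a b (rfl | rfl) (rfl | rfl) <;> norm_num
    have h1 := key YN.1 (fun j => bval (xt j)) (fun j _ => by by_cases h : xt j <;> simp [bval, h])
    have h2 := key YN.2 (fun j => 1 - bval (xt j)) (fun j _ => by by_cases h : xt j <;> simp [bval, h])
    rcases h1 with h1 | h1 <;> rcases h2 with h2 | h2 <;> simp [h1, h2]
  · intro t v; split <;> simp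
  · intro c
    refine Finset.sum_congr rfl fun j _ => ?_
    simp
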